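/- There is an absolute constant c > 0 such that for every sufficiently large integer N, if the points of [N] × [N] = {1,…,N} × {1,…,N} are colored with at most c·log log N colors, then there is always a monochromatic corner: three points (a,b), (a′,b), (a,b′) of the same color with a′ + b = a + b′ and a′ > a. -/

import Mathlib

open Finset

private lemma pigeon {α β : Type*} [DecidableEq β] (s : Finset α) (t : Finset β)
    (f : α → β) (ht : t.Nonempty) (hf : ∀ a ∈ s, f a ∈ t) :
    ∃ b ∈ t, s.card ≤ t.card * (s.filter fun a => f a = b).card := by
  obtain ⟨b, hb, hmax⟩ := t.exists_max_image (fun b => (s.filter fun a => f a = b).card) ht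
  refine ⟨b, hb, ?_⟩
  calc s.card = ∑ c ∈ t, (s.filter fun a => f a = c).card :=
        card_eq_sum_card_fiberwise hf
    _ ≤ ∑ _c ∈ t, (s.filter fun a => f a = b).card := sum_le_sum fun i hi => hmax i hi
    _ = t.card * (s.filter fun a => f a = b).card := by rw [sum_const, smul_eq_mul]

private lemma nat_bound (r : ℕ) (hr : 1 ≤ r) :
    r * (4 * r ^ 2) ^ 2 ^ r < 2 ^ 2 ^ (2 * r + 3) := by
  have h1 : r < 2 ^ r := Nat.lt_two_pow_self (n := r)
  have h2 : 4 * r ^ 2 ≤ 2 ^ (2 * r + 2) := by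
    have : r ^ 2 ≤ (2 ^ r) ^ 2 := Nat.pow_le_pow_left h1.le 2
    calc 4 * r ^ 2 ≤ 4 * (2 ^ r) ^ 2 := by omega
      _ = 2 ^ (2 * r + 2) := by rw [← pow_mul]; ring
  have h3 : (4 * r ^ 2) ^ 2 ^ r ≤ 2 ^ ((2 * r + 2) * 2 ^ r) := by
    calc (4 * r ^ 2) ^ 2 ^ r ≤ (2 ^ (2 * r + 2)) ^ 2 ^ r := Nat.pow_le_pow_left h2 _
      _ = 2 ^ ((2 * r + 2) * 2 ^ r) := by rw [← pow_mul]
  have h4 : r * (4 * r ^ 2) ^ 2 ^ r ≤ 2 ^ (r + (2 * r + 2) * 2 ^ r) := by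
    calc r * (4 * r ^ 2) ^ 2 ^ r ≤ 2 ^ r * 2 ^ ((2 * r + 2) * 2 ^ r) :=
          Nat.mul_le_mul h1.le h3
      _ = 2 ^ (r + (2 * r + 2) * 2 ^ r) := by rw [← pow_add]
  refine lt_of_le_of_lt h4 (Nat.pow_lt_pow_right (by norm_num) ?_)
  -- r + (2r+2) * 2^r < 2^(2r+3)
  have h5 : (2 * r + 2) * 2 ^ r ≤ 2 ^ (2 * r + 1) := by
    calc (2 * r + 2) * 2 ^ r ≤ 2 ^ (r + 1) * 2 ^ r := by
          refine Nat.mul_le_mul_right _ ?_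
          have : r + 1 ≤ 2 ^ r := h1
          have h2r : (2:ℕ) ^ (r + 1) = 2 * 2 ^ r := by ring
          omega
      _ = 2 ^ (2 * r + 1) := by rw [← pow_add]; congr 1; omega
  have h6 : r < 2 ^ (2 * r + 1) := by
    calc r < 2 ^ r := h1
      _ ≤ 2 ^ (2 * r + 1) := Nat.pow_le_pow_right (by norm_num) (by omega)
  have h7 : 2 ^ (2 * r + 1) + 2 ^ (2 * r + 1) ≤ 2 ^ (2 * r + 3) := by
    have : (2:ℕ) ^ (2 * r + 3) = 4 * 2 ^ (2 * r + 1) := by ring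
    omega
  omega


private lemma real_part {N r : ℕ} (hN : 2 ^ 1000 ≤ N)
    (hr : (r : ℝ) ≤ (1/4) * Real.log (Real.log N)) :
    2 ^ 2 ^ (2 * r + 3) ≤ N := by
  have hNR : ((2:ℝ) ^ (1000:ℕ)) ≤ (N : ℝ) := by
    calc ((2:ℝ) ^ (1000:ℕ)) = ((2 ^ 1000 : ℕ) : ℝ) := by push_cast; ring
      _ ≤ (N : ℝ) := Nat.cast_le.mpr hN
  have hlog2 : (0.6931471803 : ℝ) < Real.log 2 := Real.log_two_gt_d9
  have hlogN : (693 : ℝ) ≤ Real.log N := by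
    have h1 : Real.log (2 ^ (1000:ℕ)) ≤ Real.log N :=
      Real.log_le_log (by positivity) hNR
    rw [Real.log_pow] at h1
    push_cast at h1
    linarith
  have hlogNpos : (0:ℝ) < Real.log N := by linarith
  have hLL : (6 : ℝ) ≤ Real.log (Real.log N) := by
    rw [Real.le_log_iff_exp_le hlogNpos]
    have h1 : Real.exp 6 = Real.exp 1 ^ (6:ℕ) := by
      rw [Real.exp_one_pow]; norm_num
    have h2 : Real.exp 1 ^ (6:ℕ) ≤ (2.7182818286:ℝ) ^ (6:ℕ) := by
      apply pow_le_pow_left₀ (Real.exp_pos 1).le Real.exp_one_lt_d9.le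
    have h3 : (2.7182818286:ℝ) ^ (6:ℕ) ≤ 693 := by norm_num
    linarith
  set L := Real.log (Real.log N) with hL
  have hk : ((2 * r + 3 : ℕ) : ℝ) ≤ L := by push_cast; linarith
  have hlog2le1 : Real.log 2 ≤ 1 := by
    have := Real.log_two_lt_d9
    linarith
  have hlog2pos : (0:ℝ) < Real.log 2 := by linarith
  -- 2 ^ (2r+3) ≤ log N
  have h2k : ((2:ℝ) ^ (2 * r + 3 : ℕ)) ≤ Real.log N := by
    have e1 : ((2:ℝ) ^ (2 * r + 3 : ℕ)) = Real.exp (((2 * r + 3 : ℕ):ℝ) * Real.log 2) := by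
      rw [← Real.log_pow, Real.exp_log (by positivity)]
    rw [e1]
    have hpos : (0:ℝ) ≤ ((2 * r + 3 : ℕ):ℝ) := by positivity
    have hmul : ((2 * r + 3 : ℕ):ℝ) * Real.log 2 ≤ ((2 * r + 3 : ℕ):ℝ) * 1 :=
      mul_le_mul_of_nonneg_left hlog2le1 hpos
    have : ((2 * r + 3 : ℕ):ℝ) * Real.log 2 ≤ L := by linarith
    calc Real.exp _ ≤ Real.exp L := Real.exp_le_exp.mpr this
      _ = Real.log N := by rw [hL, Real.exp_log hlogNpos]
  -- 2 ^ 2 ^ (2r+3) ≤ N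
  have hfin : ((2:ℝ) ^ (2 ^ (2 * r + 3) : ℕ)) ≤ (N : ℝ) := by
    have e1 : ((2:ℝ) ^ (2 ^ (2 * r + 3) : ℕ)) =
        Real.exp (((2 ^ (2 * r + 3) : ℕ):ℝ) * Real.log 2) := by
      rw [← Real.log_pow, Real.exp_log (by positivity)]
    have e2 : ((2 ^ (2 * r + 3) : ℕ):ℝ) = (2:ℝ) ^ (2 * r + 3 : ℕ) := by push_cast; ring
    rw [e1]
    have h3 : ((2 ^ (2 * r + 3) : ℕ):ℝ) * Real.log 2 ≤ Real.log N := by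
      rw [e2]
      have hpos : (0:ℝ) ≤ (2:ℝ) ^ (2 * r + 3 : ℕ) := by positivity
      have hmul : (2:ℝ) ^ (2 * r + 3 : ℕ) * Real.log 2 ≤ (2:ℝ) ^ (2 * r + 3 : ℕ) * 1 :=
        mul_le_mul_of_nonneg_left hlog2le1 hpos
      linarith
    calc Real.exp _ ≤ Real.exp (Real.log N) := Real.exp_le_exp.mpr h3
      _ = (N:ℝ) := Real.exp_log (lt_of_lt_of_le (by positivity) hNR)
  have : ((2 ^ 2 ^ (2 * r + 3) : ℕ) : ℝ) ≤ (N : ℝ) := by push_cast; exact hfin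
  exact_mod_cast this


private lemma no_corner_false (N r : ℕ) (hr : 1 ≤ r)
    (hN : r * (4 * r ^ 2) ^ 2 ^ r < N)
    (χ : ℕ × ℕ → Fin r)
    (H : ∀ a b d : ℕ, 1 ≤ a → 1 ≤ b → 0 < d → a + d ≤ N → b + d ≤ N →
      χ (a, b) = χ (a + d, b) → χ (a, b) = χ (a, b + d) → False) : False := by
  have hbase : 1 ≤ (4 * r ^ 2) ^ 2 ^ r := Nat.one_le_pow _ _ (by positivity)
  have hN1 : 1 ≤ N := by nlinarith
  have main : ∀ k, k ≤ r → ∃ (s : ℕ) (A : Finset ℕ) (F : Finset (Fin r)),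
      F.card = k ∧ s ≤ N + 1 ∧
      (∀ x ∈ A, 1 ≤ x ∧ x + 1 ≤ s) ∧
      (∀ x ∈ A, χ (x, s - x) ∉ F) ∧
      (∀ x ∈ A, ∀ x' ∈ A, x < x' → χ (x, s - x') ∉ F) ∧
      N ≤ A.card * (4 * r ^ 2) ^ (2 ^ k - 1) := by
    intro k
    induction k with
    | zero =>
      intro _
      refine ⟨N + 1, Finset.Icc 1 N, ∅, by simp, le_refl _, ?_, by simp, by simp, ?_⟩
      · intro x hx; rw [mem_Icc] at hx; omega
      · simp [Nat.card_Icc]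
    | succ k ih =>
      intro hk
      obtain ⟨s, A, F, hF, hs, hA, inv1, inv2, hcard⟩ := ih (by omega)
      set T := (4 * r ^ 2) ^ (2 ^ k - 1) with hT
      have hT1 : 1 ≤ T := Nat.one_le_pow _ _ (by positivity)
      have hb41 : 1 ≤ 4 * r ^ 2 := by nlinarith
      have hTle : T ≤ (4 * r ^ 2) ^ 2 ^ r := by
        rw [hT]
        have h2kr : (2:ℕ) ^ k ≤ 2 ^ r := Nat.pow_le_pow_right (by norm_num) (by omega)
        exact Nat.pow_le_pow_right hb41 (le_trans (Nat.sub_le _ _) h2kr)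
      have hbig : r * T < N :=
        lt_of_le_of_lt (Nat.mul_le_mul_left r hTle) hN
      -- majority color on the diagonal
      have huniv : (Finset.univ : Finset (Fin r)).Nonempty := ⟨⟨0, hr⟩, mem_univ _⟩
      obtain ⟨c, -, hc⟩ := pigeon A Finset.univ (fun x => χ (x, s - x)) huniv
        (fun a _ => mem_univ _)
      rw [Finset.card_univ, Fintype.card_fin] at hc
      set S := A.filter (fun x => χ (x, s - x) = c) with hSdef
      have hSsub : S ⊆ A := filter_subset _ _
      have hScol : ∀ x ∈ S, χ (x, s - x) = c := by
        intro x hx; rw [hSdef, mem_filter] at hx; exact hx.2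
      have hNS : N ≤ r * S.card * T := by
        calc N ≤ A.card * T := hcard
          _ ≤ r * S.card * T := Nat.mul_le_mul_right _ hc
      have hS2 : 2 ≤ S.card := by
        by_contra h
        have h1 : S.card ≤ 1 := by omega
        have h2 : r * S.card * T ≤ r * T := by
          calc r * S.card * T ≤ r * 1 * T :=
                Nat.mul_le_mul_right _ (Nat.mul_le_mul_left _ h1)
            _ = r * T := by ring
        omega
      have hcF : c ∉ F := by
        obtain ⟨x₀, hx₀⟩ := card_pos.mp (by omega : 0 < S.card)
        have := hScol x₀ hx₀
        exact this ▸ inv1 x₀ (hSsub hx₀)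
      have hSrange : ∀ x ∈ S, 1 ≤ x ∧ x + 1 ≤ s := fun x hx => hA x (hSsub hx)
      -- pigeonhole on differences
      set t2 := (Finset.Icc (-(N:ℤ)) (N:ℤ)).erase 0 with ht2
      have ht2n : t2.Nonempty := by
        refine ⟨1, ?_⟩
        rw [ht2, mem_erase, mem_Icc]
        refine ⟨by norm_num, by omega, by exact_mod_cast Nat.one_le_cast.mpr hN1⟩
      have hmapsδ : ∀ p ∈ S.offDiag, ((p.2 : ℤ) - (p.1 : ℤ)) ∈ t2 := by
        intro p hp
        rw [mem_offDiag] at hp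
        obtain ⟨h1, h2, h3⟩ := hp
        have b1 := hSrange _ h1
        have b2 := hSrange _ h2
        rw [ht2, mem_erase, mem_Icc]
        refine ⟨?_, by push_cast; omega, by push_cast; omega⟩
        intro hzz
        have hz2 : (p.2:ℤ) = (p.1:ℤ) := sub_eq_zero.mp hzz
        exact h3 (by exact_mod_cast hz2.symm)
      obtain ⟨δ, hδt, hδcount⟩ := pigeon S.offDiag t2 (fun p => (p.2:ℤ) - p.1) ht2n hmapsδ
      have ht2card : t2.card = 2 * N := by
        rw [ht2, card_erase_of_mem (by rw [mem_Icc]; constructor <;> [omega; omega]),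
          Int.card_Icc]
        omega
      have hδne : δ ≠ 0 := (mem_erase.mp hδt).1
      set δ₀ := δ.natAbs with hδ₀def
      have hδ₀pos : 1 ≤ δ₀ := by
        rw [hδ₀def]; exact Int.natAbs_pos.mpr hδne
      set A2 := S.filter (fun x => x + δ₀ ∈ S) with hA2
      have hA2S : A2 ⊆ S := filter_subset _ _
      have hA2mem : ∀ x ∈ A2, x ∈ S ∧ x + δ₀ ∈ S := by
        intro x hx; rw [hA2, mem_filter] at hx; exact hx
      -- fiber injects into A2
      have hfibA2 : (S.offDiag.filter fun p => (p.2:ℤ) - p.1 = δ).card ≤ A2.card := by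
        rcases lt_or_gt_of_ne hδne with hneg | hpos
        · -- δ < 0 : map p ↦ p.2
          apply card_le_card_of_injOn (fun p => p.2)
          · intro p hp
            rw [mem_coe, mem_filter, mem_offDiag] at hp
            obtain ⟨⟨h1, h2, -⟩, hpd⟩ := hp
            have habs : (δ₀ : ℤ) = -δ := by
              rw [hδ₀def, ← Int.natAbs_neg, Int.natAbs_of_nonneg (by omega)]
            have : p.2 + δ₀ = p.1 := by omega
            simp only [mem_coe, hA2, mem_filter]
            exact ⟨h2, by rw [this]; exact h1⟩
          · intro p hp q hq hpq
            simp only [mem_coe, mem_filter, mem_offDiag] at hp hq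
            have hpq2 : p.2 = q.2 := hpq
            have : p.1 = q.1 := by omega
            exact Prod.ext this hpq2
        · -- δ > 0 : map p ↦ p.1
          apply card_le_card_of_injOn (fun p => p.1)
          · intro p hp
            rw [mem_coe, mem_filter, mem_offDiag] at hp
            obtain ⟨⟨h1, h2, -⟩, hpd⟩ := hp
            have habs : (δ₀ : ℤ) = δ := by
              rw [hδ₀def, Int.natAbs_of_nonneg (by omega)]
            have : p.1 + δ₀ = p.2 := by omega
            simp only [mem_coe, hA2, mem_filter]
            exact ⟨h1, by rw [this]; exact h2⟩
          · intro p hp q hq hpq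
            simp only [mem_coe, mem_filter, mem_offDiag] at hp hq
            have hpq1 : p.1 = q.1 := hpq
            have : p.2 = q.2 := by omega
            exact Prod.ext hpq1 this
      -- counting
      have hcount : S.card * S.card - S.card ≤ 2 * N * A2.card := by
        calc S.card * S.card - S.card = S.offDiag.card := (offDiag_card S).symm
          _ ≤ t2.card * (S.offDiag.filter fun p => (p.2:ℤ) - p.1 = δ).card := hδcount
          _ ≤ 2 * N * A2.card := by
              rw [ht2card]; exact Nat.mul_le_mul_left _ hfibA2
      have h6 : S.card * S.card ≤ 2 * (2 * N * A2.card) := by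
        have hmm : 2 * S.card ≤ S.card * S.card := Nat.mul_le_mul_right S.card hS2
        have key : ∀ X m Z : ℕ, 2 * m ≤ X → X - m ≤ Z → X ≤ 2 * Z := by
          intros X m Z h1 h2; omega
        exact key _ _ _ hmm hcount
      -- conclude new cardinality bound
      have hNpos : 0 < N := hN1
      have final : N ≤ A2.card * (4 * r ^ 2 * T ^ 2) := by
        have h7 : N * N ≤ (r * S.card * T) * (r * S.card * T) := Nat.mul_le_mul hNS hNS
        have h8 : (r * S.card * T) * (r * S.card * T)
            = (r * T * (r * T)) * (S.card * S.card) := by ring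
        have h9 : (r * T * (r * T)) * (S.card * S.card)
            ≤ (r * T * (r * T)) * (2 * (2 * N * A2.card)) := Nat.mul_le_mul_left _ h6
        have h10 : (r * T * (r * T)) * (2 * (2 * N * A2.card))
            = N * (A2.card * (4 * r ^ 2 * T ^ 2)) := by ring
        have : N * N ≤ N * (A2.card * (4 * r ^ 2 * T ^ 2)) := by
          rw [← h10]; rw [h8] at h7; exact le_trans h7 h9
        exact Nat.le_of_mul_le_mul_left this hNpos
      have hexp : 4 * r ^ 2 * T ^ 2 = (4 * r ^ 2) ^ (2 ^ (k + 1) - 1) := by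
        rw [hT, ← pow_mul, ← pow_succ']
        congr 1
        have h1 : 1 ≤ 2 ^ k := Nat.one_le_two_pow
        have h2 : 2 ^ (k + 1) = 2 * 2 ^ k := by ring
        omega
      -- build the new witnesses
      refine ⟨s - δ₀, A2, insert c F, ?_, by omega, ?_, ?_, ?_, ?_⟩
      · rw [card_insert_of_notMem hcF, hF]
      · -- ranges
        intro x hx
        obtain ⟨hx1, hx2⟩ := hA2mem x hx
        have b1 := hSrange x hx1
        have b2 := hSrange _ hx2
        omega
      · -- inv1
        intro x hx
        obtain ⟨hx1, hx2⟩ := hA2mem x hx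
        have b1 := hSrange x hx1
        have b2 := hSrange _ hx2
        have e : s - δ₀ - x = s - (x + δ₀) := by omega
        rw [e, mem_insert]
        push_neg
        constructor
        · -- not color c
          intro heq
          refine H x (s - (x + δ₀)) δ₀ b1.1 (by omega) (by omega) (by omega) (by omega) ?_ ?_
          · have : x + δ₀ = x + δ₀ := rfl
            calc χ (x, s - (x + δ₀)) = c := heq
              _ = χ (x + δ₀, s - (x + δ₀)) := (hScol _ hx2).symm
          · have e2 : s - (x + δ₀) + δ₀ = s - x := by omega
            rw [e2]
            calc χ (x, s - (x + δ₀)) = c := heq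
              _ = χ (x, s - x) := (hScol _ hx1).symm
        · -- not in F
          exact inv2 x (hSsub hx1) (x + δ₀) (hSsub hx2) (by omega)
      · -- inv2
        intro x hx x' hx' hlt
        obtain ⟨hx1, hx2⟩ := hA2mem x hx
        obtain ⟨hx'1, hx'2⟩ := hA2mem x' hx'
        have b1 := hSrange x hx1
        have b2 := hSrange _ hx'2
        have e : s - δ₀ - x' = s - (x' + δ₀) := by omega
        rw [e, mem_insert]
        push_neg
        constructor
        · -- not color c
          intro heq
          refine H x (s - (x' + δ₀)) (x' + δ₀ - x) b1.1 (by omega) (by omega)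
            (by omega) (by omega) ?_ ?_
          · have e2 : x + (x' + δ₀ - x) = x' + δ₀ := by omega
            rw [e2]
            calc χ (x, s - (x' + δ₀)) = c := heq
              _ = χ (x' + δ₀, s - (x' + δ₀)) := (hScol _ hx'2).symm
          · have e2 : s - (x' + δ₀) + (x' + δ₀ - x) = s - x := by omega
            rw [e2]
            calc χ (x, s - (x' + δ₀)) = c := heq
              _ = χ (x, s - x) := (hScol _ hx1).symm
        · -- not in F
          exact inv2 x (hSsub hx1) (x' + δ₀) (hSsub hx'2) (by omega)
      · -- cardinality
        rw [← hexp]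
        exact final
  -- conclude
  obtain ⟨s, A, F, hF, hs, hA, inv1, inv2, hcard⟩ := main r le_rfl
  have hAne : A.Nonempty := by
    rw [← card_pos]
    by_contra h
    have : A.card = 0 := by omega
    rw [this, zero_mul] at hcard
    omega
  obtain ⟨x, hx⟩ := hAne
  have hFuniv : F = Finset.univ := by
    apply (Finset.card_eq_iff_eq_univ F).mp
    rw [hF, Fintype.card_fin]
  exact inv1 x hx (hFuniv ▸ mem_univ _)


/-- There is an absolute constant `c > 0` such that for every sufficiently large
`N`, any coloring of `{1, …, N} × {1, …, N}` with at most `c * log log N` colors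
contains a monochromatic corner: points `(a, b)`, `(a + d, b)`, `(a, b + d)` of
the same color with `d > 0`. -/
theorem monochromatic_corner_in_grid :
    ∃ c : ℝ, 0 < c ∧ ∃ N₀ : ℕ, ∀ N : ℕ, N₀ ≤ N →
      ∀ r : ℕ, (r : ℝ) ≤ c * Real.log (Real.log N) →
        ∀ χ : ℕ × ℕ → Fin r, ∃ a b d : ℕ,
          1 ≤ a ∧ 1 ≤ b ∧ 0 < d ∧ a + d ≤ N ∧ b + d ≤ N ∧
          χ (a, b) = χ (a + d, b) ∧ χ (a, b) = χ (a, b + d) := by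
  refine ⟨1/4, by norm_num, 2 ^ 1000, ?_⟩
  intro N hN r hr χ
  rcases Nat.eq_zero_or_pos r with h0 | hpos
  · subst h0
    exact (χ (1, 1)).elim0
  · by_contra hcon
    push_neg at hcon
    refine no_corner_false N r hpos ?_ χ ?_
    · exact lt_of_lt_of_le (nat_bound r hpos) (real_part hN hr)
    · intro a b d h1 h2 h3 h4 h5 e1 e2
      exact hcon a b d h1 h2 h3 h4 h5 e1 e2
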